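/- Let k ≥ 2 and let Σ' be the k×k real symmetric matrix whose first (k-1)×(k-1) principal block has diagonal entries a and off-diagonal entries b, whose last row and column (excluding the diagonal) have entries c, and whose last diagonal entry is a. Then det(Σ') = (a - b)^{k-2} (a² + (k-2)ab - (k-1)c²). -/
import Mathlib


open Matrix

theorem stmt14 (k : ℕ) (hk : 2 ≤ k) (a b c : ℝ) :
    (Matrix.of (fun i j : Fin k =>
        if i = j then a else if i.val < k - 1 ∧ j.val < k - 1 then b else c)).det =
      (a - b) ^ (k - 2) * (a ^ 2 + (k - 2 : ℝ) * a * b - (k - 1 : ℝ) * c ^ 2) := by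
  obtain ⟨m, rfl⟩ : ∃ m, k = m + 2 := ⟨k - 2, by omega⟩
  set f : ℝ → ℝ := fun x => (Matrix.of (fun i j : Fin (m+2) =>
      if i = j then x else if i.val < m + 2 - 1 ∧ j.val < m + 2 - 1 then b else c)).det with hf
  set g : ℝ → ℝ := fun x =>
      (x - b) ^ (m + 2 - 2) * (x ^ 2 + ((m+2 : ℕ) - 2 : ℝ) * x * b - ((m+2 : ℕ) - 1 : ℝ) * c ^ 2)
    with hg
  have sum1 : ∀ r : ℝ, (∑ j : Fin (m+2), (if (j : ℕ) < m + 1 then r else 0)) = (m+1) * r := by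
    intro r
    rw [Fin.sum_univ_eq_sum_range (fun n => if n < m + 1 then r else 0),
      Finset.sum_range_succ, if_neg (lt_irrefl _), add_zero,
      Finset.sum_congr rfl (fun i hi => if_pos (Finset.mem_range.mp hi)),
      Finset.sum_const, Finset.card_range, nsmul_eq_mul]
    push_cast
    ring
  have sum2 : ∀ r : ℝ, (∑ j : Fin (m+2), (if (j : ℕ) < m + 1 then 0 else r)) = r := by
    intro r
    rw [Fin.sum_univ_eq_sum_range (fun n => if n < m + 1 then 0 else r),
      Finset.sum_range_succ, if_neg (lt_irrefl _),
      Finset.sum_congr rfl (fun i hi => if_pos (Finset.mem_range.mp hi)),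
      Finset.sum_const, smul_zero, zero_add]
  have main : ∀ x : ℝ, x ≠ b → f x = g x := by
    intro x hx
    have hl : x - b ≠ 0 := sub_ne_zero.mpr hx
    set l : ℝ := x - b with hldef
    set W : Matrix (Fin (m+2)) (Fin 2) ℝ := Matrix.of (fun i t =>
      if (i : ℕ) < m + 1 then (if t = 0 then (1:ℝ) else 0) else (if t = 1 then 1 else 0)) with hW
    set X : Matrix (Fin 2) (Fin (m+2)) ℝ := Matrix.of (fun t j =>
      if (j : ℕ) < m + 1 then (if t = 0 then b else c) else (if t = 0 then c else b)) with hX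
    have hM : (Matrix.of (fun i j : Fin (m+2) =>
        if i = j then x else if i.val < m + 2 - 1 ∧ j.val < m + 2 - 1 then b else c))
        = l • 1 + W * X := by
      have hval : m + 2 - 1 = m + 1 := rfl
      ext i j
      have hi2 := i.isLt
      have hj2 := j.isLt
      simp only [Matrix.add_apply, Matrix.smul_apply, Matrix.one_apply, Matrix.mul_apply,
        Fin.sum_univ_two, hW, hX, Matrix.of_apply, smul_eq_mul, hval]
      by_cases h1 : (i : ℕ) < m + 1 <;> by_cases h2 : (j : ℕ) < m + 1
      · by_cases h3 : i = j
        · simp only [h1, h2, h3, if_true, and_self, if_pos rfl]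
          norm_num
          rw [hldef]; ring
        · simp [h1, h2, h3]
      · have h3 : i ≠ j := fun h => h2 (by rw [← h]; exact h1)
        simp [h1, h2, h3]
      · have h3 : i ≠ j := fun h => h1 (by rw [h]; exact h2)
        simp [h1, h2, h3]
      · have h3 : i = j := Fin.ext (by omega)
        subst h3
        simp only [h1, if_false, if_pos rfl, and_self]
        norm_num
        rw [hldef]; ring
    have hB00 : (X * W) 0 0 = (m+1) * b := by
      simp only [Matrix.mul_apply, hX, hW, Matrix.of_apply]
      refine (Finset.sum_congr rfl fun j _ => ?_).trans (sum1 b)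
      by_cases h : (j : ℕ) < m + 1 <;> simp [h]
    have hB01 : (X * W) 0 1 = c := by
      simp only [Matrix.mul_apply, hX, hW, Matrix.of_apply]
      refine (Finset.sum_congr rfl fun j _ => ?_).trans (sum2 c)
      by_cases h : (j : ℕ) < m + 1 <;> simp [h]
    have hB10 : (X * W) 1 0 = (m+1) * c := by
      simp only [Matrix.mul_apply, hX, hW, Matrix.of_apply]
      refine (Finset.sum_congr rfl fun j _ => ?_).trans (sum1 c)
      by_cases h : (j : ℕ) < m + 1 <;> simp [h]
    have hB11 : (X * W) 1 1 = b := by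
      simp only [Matrix.mul_apply, hX, hW, Matrix.of_apply]
      refine (Finset.sum_congr rfl fun j _ => ?_).trans (sum2 b)
      by_cases h : (j : ℕ) < m + 1 <;> simp [h]
    have h1 : l • (1 : Matrix (Fin (m+2)) (Fin (m+2)) ℝ) + W * X
        = l • (1 + (l⁻¹ • W) * X) := by
      rw [smul_add, Matrix.smul_mul, smul_smul, mul_inv_cancel₀ hl, one_smul]
    show (Matrix.of (fun i j : Fin (m+2) =>
        if i = j then x else if i.val < m + 2 - 1 ∧ j.val < m + 2 - 1 then b else c)).det = g x
    rw [hM, h1, Matrix.det_smul, Matrix.det_one_add_mul_comm, Matrix.mul_smul,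
      Matrix.det_fin_two]
    simp only [Matrix.add_apply, Matrix.smul_apply, Matrix.one_apply, smul_eq_mul,
      hB00, hB01, hB10, hB11, Fintype.card_fin, smul_eq_mul]
    norm_num [hg]
    field_simp
    ring
  have hfc : Continuous f := by
    apply Continuous.matrix_det
    apply continuous_matrix
    intro i j
    by_cases h : i = j <;> simp [h] <;> fun_prop
  have hgc : Continuous g := by fun_prop
  have := Continuous.ext_on (dense_compl_singleton b) hfc hgc
    (fun x hx => main x (by simpa using hx))
  exact congrFun this a
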